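/- arXiv:1707.08947 — 2 statements merged into one kernel-verified Lean document; each statement's English description precedes it below -/
import Mathlib

section
/- Under the hypotheses 0 < q < 1 and |ω| > R (with R bounding |g| as above), one has the uniform estimate sup_{l∈ℤ} (1+|l|)/|ν_l(q)| ≤ (q̃ + 1/(1-q)) / (|ω| − R), where q̃ = 1/q for 0 < q < 1/2 and q̃ = 1/(1-q) for 1/2 ≤ q < 1. -/
theorem stmt4 (q ω R : ℝ) (hq0 : 0 < q) (hq1 : q < 1) (Nc : ℕ) (κ : ℕ → ℝ)
    (hR0 : 0 ≤ R)
    (hR : ∀ l : ℤ,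
      |4 * ∑ j ∈ Finset.Icc 1 Nc, κ j * Real.sin ((q + l) * j / 2) ^ 2| ≤ R * |q + l|)
    (hω : R < |ω|)
    (qt : ℝ) (hqt : (0 < q ∧ q < 1/2 → qt = 1/q) ∧ (1/2 ≤ q ∧ q < 1 → qt = 1/(1-q))) :
    ∀ l : ℤ,
      (1 + |(l : ℝ)|) /
        |ω * (q + l) + 4 * ∑ j ∈ Finset.Icc 1 Nc, κ j * Real.sin ((q + l) * j / 2) ^ 2|
      ≤ (qt + 1/(1-q)) / (|ω| - R) := by
  intro l
  set g : ℝ := 4 * ∑ j ∈ Finset.Icc 1 Nc, κ j * Real.sin ((q + l) * j / 2) ^ 2 with hg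
  have h1q : (0:ℝ) < 1 - q := by linarith
  -- qt ≥ 1/(1-q) and other qt facts
  have hqt1 : 1/(1-q) ≤ qt := by
    rcases lt_or_ge q (1/2) with h | h
    · rw [hqt.1 ⟨hq0, h⟩]
      exact one_div_le_one_div_of_le hq0 (by linarith)
    · rw [hqt.2 ⟨h, hq1⟩]
  have hx : q + (l:ℝ) ≠ 0 := by
    intro h
    rcases le_or_gt 0 l with hl | hl
    · have : (0:ℝ) ≤ (l:ℝ) := Int.cast_nonneg_iff.mpr hl
      linarith
    · have : (l:ℝ) ≤ -1 := by exact_mod_cast Int.le_sub_one_of_lt hl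
      linarith
  have hxpos : 0 < |q + (l:ℝ)| := abs_pos.mpr hx
  -- key: (1+|l|)/|q+l| ≤ qt + 1/(1-q)
  have hkey : (1 + |(l:ℝ)|) / |q + (l:ℝ)| ≤ qt + 1/(1-q) := by
    rw [div_le_iff₀ hxpos]
    rcases lt_trichotomy l 0 with hl | hl | hl
    · have hm : (l:ℝ) ≤ -1 := by exact_mod_cast Int.le_sub_one_of_lt hl
      have habs : |(l:ℝ)| = -(l:ℝ) := abs_of_neg (by linarith)
      have habs2 : |q + (l:ℝ)| = -(q + (l:ℝ)) := abs_of_neg (by linarith)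
      rw [habs, habs2]
      -- (1 - m) ≤ (qt + 1/(1-q)) * (-(q+m)); use qt ≥ 1/(1-q)
      have h2 : (1 - (l:ℝ)) ≤ (2/(1-q)) * (-(q + (l:ℝ))) := by
        rw [div_mul_eq_mul_div, le_div_iff₀ h1q]
        nlinarith
      have h3 : (2/(1-q)) * (-(q + (l:ℝ))) ≤ (qt + 1/(1-q)) * (-(q + (l:ℝ))) := by
        apply mul_le_mul_of_nonneg_right _ (by linarith)
        have h4 : 2/(1-q) = 1/(1-q) + 1/(1-q) := by ring
        linarith
      linarith
    · subst hl
      simp only [Int.cast_zero, abs_zero, add_zero]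
      rw [abs_of_pos hq0]
      have hpos : 0 < 1/(1-q) := by positivity
      have h0 : 1/q ≤ qt + 1/(1-q) := by
        rcases lt_or_ge q (1/2) with h | h
        · rw [hqt.1 ⟨hq0, h⟩]
          linarith
        · have h2 : 1/q ≤ 1/(1-q) := one_div_le_one_div_of_le (by linarith) (by linarith)
          linarith
      calc (1:ℝ) = (1/q) * q := by field_simp
        _ ≤ (qt + 1/(1-q)) * q := mul_le_mul_of_nonneg_right h0 hq0.le
    · have hm : (1:ℝ) ≤ (l:ℝ) := by exact_mod_cast hl
      have habs : |(l:ℝ)| = (l:ℝ) := abs_of_pos (by linarith)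
      have habs2 : |q + (l:ℝ)| = q + (l:ℝ) := abs_of_pos (by linarith)
      rw [habs, habs2]
      have hq2 : (1:ℝ) ≤ 1/(1-q) := by
        rw [le_div_iff₀ h1q]; linarith
      have hqt2 : (1:ℝ) ≤ qt := le_trans hq2 hqt1
      nlinarith
  -- lower bound on denominator
  have hD : (|ω| - R) * |q + (l:ℝ)| ≤ |ω * (q + l) + g| := by
    have h1 : |ω| * |q + (l:ℝ)| = |ω * (q + l)| := (abs_mul ω _).symm
    have h2 : |ω * (q + l)| ≤ |ω * (q + l) + g| + |g| := by
      calc |ω * (q + l)| = |(ω * (q + l) + g) + (-g)| := by rw [add_neg_cancel_right]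
        _ ≤ |ω * (q + l) + g| + |(-g)| := abs_add_le _ _
        _ = |ω * (q + l) + g| + |g| := by rw [abs_neg]
    have h3 := hR l
    nlinarith
  have hDpos : 0 < (|ω| - R) * |q + (l:ℝ)| := by
    apply mul_pos (by linarith) hxpos
  have hApos : (0:ℝ) ≤ 1 + |(l:ℝ)| := by positivity
  calc (1 + |(l:ℝ)|) / |ω * (q + l) + g|
      ≤ (1 + |(l:ℝ)|) / ((|ω| - R) * |q + (l:ℝ)|) :=
        div_le_div_of_nonneg_left hApos hDpos hD
    _ = ((1 + |(l:ℝ)|) / |q + (l:ℝ)|) / (|ω| - R) := by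
        rw [mul_comm, ← div_div]
    _ ≤ (qt + 1/(1-q)) / (|ω| - R) := by
        gcongr
end

section
/- Suppose Φ ∈ C¹ is a 2π-periodic solution of -iωΦ'(u) + ωqΦ(u) = Σ_{j=1}^{N_c} κ_j[Φ(u+j)e^{iqj} − 2Φ(u) + Φ(u−j)e^{-iqj}] + F(|Φ(u)|²)Φ(u), with sup|Φ| ≤ P^{1/2}, |F(x)| ≤ a(1+x^b), and |ω| ≥ R > 0 where 0 < q < 1. Then sup |Φ'(u)| ≤ (q + (4κ̄ + a(1+P^b))/R) · P^{1/2}, where κ̄ = Σ_{j=1}^{N_c} κ_j and all κ_j ≥ 0. -/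
open Complex

theorem stmt9 (ω q R a b P : ℝ) (hR : 0 < R) (hω : R ≤ |ω|)
    (hq0 : 0 < q) (hq1 : q < 1) (ha : 0 < a) (hb : 0 < b) (hP : 0 < P)
    (Nc : ℕ) (κ : ℕ → ℝ) (hκ : ∀ j, 0 ≤ κ j)
    (F : ℝ → ℝ) (hFc : ContinuousOn F (Set.Ici 0))
    (hF : ∀ x : ℝ, 0 ≤ x → |F x| ≤ a * (1 + x ^ b))
    (Φ : ℝ → ℂ) (hΦ : ContDiff ℝ 1 Φ) (hper : ∀ u, Φ (u + 2 * Real.pi) = Φ u)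
    (hbd : ∀ u, ‖Φ u‖ ≤ P ^ ((1 : ℝ)/2))
    (heq : ∀ u : ℝ,
      -(I * ω) * deriv Φ u + (ω * q : ℝ) * Φ u
        = ∑ j ∈ Finset.Icc 1 Nc, (κ j : ℂ) *
            (Φ (u + j) * Complex.exp (I * q * j) - 2 * Φ u
              + Φ (u - j) * Complex.exp (-(I * q * j)))
          + (F (‖Φ u‖ ^ 2) : ℂ) * Φ u) :
    ∀ u : ℝ, ‖deriv Φ u‖ ≤
      (q + (4 * (∑ j ∈ Finset.Icc 1 Nc, κ j) + a * (1 + P ^ b)) / R) * P ^ ((1 : ℝ)/2) := by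
  intro u
  set M : ℝ := P ^ ((1 : ℝ)/2) with hM
  have hM0 : 0 ≤ M := Real.rpow_nonneg hP.le _
  have hM2 : M ^ 2 = P := by
    rw [hM, ← Real.rpow_natCast (P ^ ((1:ℝ)/2)) 2, ← Real.rpow_mul hP.le]
    norm_num
  set K : ℝ := ∑ j ∈ Finset.Icc 1 Nc, κ j with hK
  have hK0 : 0 ≤ K := Finset.sum_nonneg fun j _ => hκ j
  set C : ℝ := a * (1 + P ^ b) with hC
  have hPb : 0 < P ^ b := Real.rpow_pos_of_pos hP b
  have hC0 : 0 ≤ C := by positivity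
  have hωpos : 0 < |ω| := lt_of_lt_of_le hR hω
  -- bound on F term
  have hΦsq : ∀ v : ℝ, ‖Φ v‖ ^ 2 ≤ P := by
    intro v
    have h := hbd v
    nlinarith [norm_nonneg (Φ v)]
  have hF' : |F (‖Φ u‖ ^ 2)| ≤ C := by
    have h1 := hF _ (sq_nonneg ‖Φ u‖)
    have h2 : (‖Φ u‖ ^ 2) ^ b ≤ P ^ b :=
      Real.rpow_le_rpow (sq_nonneg _) (hΦsq u) hb.le
    nlinarith
  -- norm of exponentials
  have hexp : ∀ j : ℕ, ‖Complex.exp (I * q * j)‖ = 1 := by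
    intro j
    rw [Complex.norm_exp]
    simp
  have hexp' : ∀ j : ℕ, ‖Complex.exp (-(I * q * j))‖ = 1 := by
    intro j
    rw [Complex.norm_exp]
    simp
  -- sum bound
  have hS : ‖∑ j ∈ Finset.Icc 1 Nc, (κ j : ℂ) *
      (Φ (u + j) * Complex.exp (I * q * j) - 2 * Φ u
        + Φ (u - j) * Complex.exp (-(I * q * j)))‖ ≤ K * (4 * M) := by
    calc ‖∑ j ∈ Finset.Icc 1 Nc, (κ j : ℂ) *
        (Φ (u + j) * Complex.exp (I * q * j) - 2 * Φ u
          + Φ (u - j) * Complex.exp (-(I * q * j)))‖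
        ≤ ∑ j ∈ Finset.Icc 1 Nc, ‖(κ j : ℂ) *
        (Φ (u + j) * Complex.exp (I * q * j) - 2 * Φ u
          + Φ (u - j) * Complex.exp (-(I * q * j)))‖ := norm_sum_le _ _
      _ ≤ ∑ j ∈ Finset.Icc 1 Nc, κ j * (4 * M) := by
          apply Finset.sum_le_sum
          intro j _
          rw [norm_mul, Complex.norm_real, Real.norm_eq_abs, _root_.abs_of_nonneg (hκ j)]
          apply mul_le_mul_of_nonneg_left _ (hκ j)
          have h1 : ‖Φ (u + j) * Complex.exp (I * q * j)‖ ≤ M := by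
            rw [norm_mul, hexp j, mul_one]; exact hbd _
          have h2 : ‖(2 : ℂ) * Φ u‖ ≤ 2 * M := by
            rw [norm_mul]
            simp only [Complex.norm_ofNat]
            nlinarith [hbd u]
          have h3 : ‖Φ (u - j) * Complex.exp (-(I * q * j))‖ ≤ M := by
            rw [norm_mul, hexp' j, mul_one]; exact hbd _
          calc ‖Φ (u + j) * Complex.exp (I * q * j) - 2 * Φ u
              + Φ (u - j) * Complex.exp (-(I * q * j))‖
              ≤ ‖Φ (u + j) * Complex.exp (I * q * j) - 2 * Φ u‖
                + ‖Φ (u - j) * Complex.exp (-(I * q * j))‖ := norm_add_le _ _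
            _ ≤ ‖Φ (u + j) * Complex.exp (I * q * j)‖ + ‖(2 : ℂ) * Φ u‖
                + ‖Φ (u - j) * Complex.exp (-(I * q * j))‖ := by
                  have := norm_sub_le (Φ (u + j) * Complex.exp (I * q * j)) ((2 : ℂ) * Φ u)
                  linarith
            _ ≤ 4 * M := by linarith
      _ = K * (4 * M) := by rw [hK, ← Finset.sum_mul]
  -- rearrange the equation
  have key : -(I * (ω : ℂ)) * deriv Φ u
      = (∑ j ∈ Finset.Icc 1 Nc, (κ j : ℂ) *
          (Φ (u + j) * Complex.exp (I * q * j) - 2 * Φ u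
            + Φ (u - j) * Complex.exp (-(I * q * j)))
        + (F (‖Φ u‖ ^ 2) : ℂ) * Φ u) - ((ω * q : ℝ) : ℂ) * Φ u := by
    linear_combination heq u
  have hnorm : ‖-(I * (ω : ℂ)) * deriv Φ u‖ = |ω| * ‖deriv Φ u‖ := by
    rw [norm_mul, norm_neg, norm_mul, Complex.norm_I, one_mul, Complex.norm_real,
      Real.norm_eq_abs]
  have hL : |ω| * ‖deriv Φ u‖ ≤ K * (4 * M) + C * M + |ω| * q * M := by
    rw [← hnorm, key]
    have hFΦ : ‖((F (‖Φ u‖ ^ 2) : ℂ)) * Φ u‖ ≤ C * M := by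
      rw [norm_mul, Complex.norm_real, Real.norm_eq_abs]
      exact mul_le_mul hF' (hbd u) (norm_nonneg _) hC0
    have hωq : ‖((ω * q : ℝ) : ℂ) * Φ u‖ ≤ |ω| * q * M := by
      rw [norm_mul, Complex.norm_real, Real.norm_eq_abs, abs_mul, abs_of_pos hq0]
      exact mul_le_mul_of_nonneg_left (hbd u) (by positivity)
    calc ‖_ - _‖ ≤ ‖_ + _‖ + ‖((ω * q : ℝ) : ℂ) * Φ u‖ := norm_sub_le _ _
      _ ≤ (‖∑ j ∈ Finset.Icc 1 Nc, (κ j : ℂ) *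
          (Φ (u + j) * Complex.exp (I * q * j) - 2 * Φ u
            + Φ (u - j) * Complex.exp (-(I * q * j)))‖
            + ‖((F (‖Φ u‖ ^ 2) : ℂ)) * Φ u‖) + ‖((ω * q : ℝ) : ℂ) * Φ u‖ := by
          gcongr
          exact norm_add_le _ _
      _ ≤ K * (4 * M) + C * M + |ω| * q * M := by linarith
  -- final arithmetic
  have hgoal : ‖deriv Φ u‖ ≤ q * M + (4 * K + C) * M / R := by
    set X := ‖deriv Φ u‖ with hX
    rcases le_or_gt X (q * M) with h | h
    · have : 0 ≤ (4 * K + C) * M / R := by positivity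
      linarith
    · have h1 : |ω| * (X - q * M) ≤ (4 * K + C) * M := by nlinarith
      have h2 : R * (X - q * M) ≤ |ω| * (X - q * M) := by nlinarith
      have h3 : R * (X - q * M) ≤ (4 * K + C) * M := le_trans h2 h1
      have h4 : X - q * M ≤ (4 * K + C) * M / R := by
        rw [le_div_iff₀ hR]; linarith [h3, mul_comm R (X - q * M)]
      linarith
  calc ‖deriv Φ u‖ ≤ q * M + (4 * K + C) * M / R := hgoal
    _ = (q + (4 * K + C) / R) * M := by field_simp
end
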